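/- Let C_•, D_• be chain complexes of finite-dimensional F_2-vector spaces and γ_• : D_• → C_• a chain map. Suppose: (i) the linear maps ∂^D_1, ∂^C_2, γ_1 and their transposes are ω-bounded (each basis vector maps to a vector of Hamming weight at most ω, so ‖M x‖ ≤ ω ‖x‖ for all x); (ii) ε-systolic expansion holds: for every u ∈ D_1 \ ker ∂^D_1, ‖∂^D_1 u‖ ≥ ε · min_{z ∈ ker ∂^D_1} ‖u + z‖, with ε ≥ ω. Let L' ⊆ C_1 ⊕ D_0 be the set of representatives, embedded via c ↦ (0,c), of a fixed basis of H_1(C)/γ_*(H_1(D)) lifted to 1-cycles of C. Then for every w ∈ (L' \ {0}) + im ∂^C_2 and every u ∈ D_1, ‖w + (γ_1 + ∂^D_1) u‖ ≥ d_X(C), where d_X(C) = Syst_1(C_•) is the minimal weight of a 1-cycle of C that is not a boundary and (γ_1 + ∂^D_1)u denotes (∂^D_1 u, γ_1 u) ∈ D_0 ⊕ C_1. In particular d_X(tot E) ≥ d_X(C). -/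

import Mathlib

open Matrix


private lemma v_addself {n : ℕ} (x : Fin n → ZMod 2) : x + x = 0 := by
  funext i
  exact CharTwo.add_self_eq_zero _

private lemma eq_iff_add {n : ℕ} (x y : Fin n → ZMod 2) : x = y ↔ x + y = 0 := by
  constructor
  · rintro rfl; exact v_addself x
  · intro h
    have h2 := congrArg (· + y) h
    simpa [add_assoc, v_addself] using h2

private lemma hn_add_le {n : ℕ} (x y : Fin n → ZMod 2) :
    hammingNorm (x + y) ≤ hammingNorm x + hammingNorm y := by
  have h := hammingDist_triangle (x + y) x 0
  rw [hammingDist_zero_right, hammingDist_zero_right, hammingDist_eq_hammingNorm] at h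
  have hy : -y = y := by funext i; exact ZMod.neg_eq_self_mod_two _
  simpa [add_sub_cancel_left, add_comm, hy] using h

/-- Distance preservation for fast surgery with `ε ≥ ω`: if `∂^D₁, ∂^C₂, ∂^C₁, γ₁`
and their transposes are `ω`-bounded and `D₁` is `ε`-systolic expanding with `ε ≥ ω`,
then for every `w ∈ (L' \ {0}) + im ∂^C₂` (where `L'` is a lift of a basis of
`H₁(C)/γ_*(H₁(D))` to 1-cycles of `C`) and every `u ∈ D₁`,
`‖(∂^D₁ u, w + γ₁ u)‖ ≥ d_X(C)`; in particular `d_X(tot E) ≥ d_X(C)`. -/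
theorem stmt7 (d1 d0 c2 c1 c0 : ℕ) (ε ω : ℝ)
    (dD1 : Matrix (Fin d0) (Fin d1) (ZMod 2))
    (dC2 : Matrix (Fin c1) (Fin c2) (ZMod 2)) (dC1 : Matrix (Fin c0) (Fin c1) (ZMod 2))
    (γ1 : Matrix (Fin c1) (Fin d1) (ZMod 2)) (γ0 : Matrix (Fin c0) (Fin d0) (ZMod 2))
    (hC : dC1 * dC2 = 0) (hγ0 : γ0 * dD1 = dC1 * γ1)
    (hsurj : Function.Surjective dD1.mulVec)
    -- ω-boundedness of the maps and their transposes
    (hbD1 : ∀ x, (hammingNorm (dD1.mulVec x) : ℝ) ≤ ω * hammingNorm x)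
    (hbD1t : ∀ x, (hammingNorm (dD1.transpose.mulVec x) : ℝ) ≤ ω * hammingNorm x)
    (hbC2 : ∀ x, (hammingNorm (dC2.mulVec x) : ℝ) ≤ ω * hammingNorm x)
    (hbC2t : ∀ x, (hammingNorm (dC2.transpose.mulVec x) : ℝ) ≤ ω * hammingNorm x)
    (hbC1 : ∀ x, (hammingNorm (dC1.mulVec x) : ℝ) ≤ ω * hammingNorm x)
    (hbC1t : ∀ x, (hammingNorm (dC1.transpose.mulVec x) : ℝ) ≤ ω * hammingNorm x)
    (hbγ1 : ∀ x, (hammingNorm (γ1.mulVec x) : ℝ) ≤ ω * hammingNorm x)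
    (hbγ1t : ∀ x, (hammingNorm (γ1.transpose.mulVec x) : ℝ) ≤ ω * hammingNorm x)
    -- ε-systolic expansion of D₁
    (hexp : ∀ u : Fin d1 → ZMod 2, dD1.mulVec u ≠ 0 →
        ε * ((sInf {k : ℕ | ∃ z, dD1.mulVec z = 0 ∧ hammingNorm (u + z) = k} : ℕ) : ℝ) ≤
          (hammingNorm (dD1.mulVec u) : ℝ))
    (hε : 0 < ε) (hεω : ω ≤ ε)
    -- L' : a lift of a basis of H₁(C)/γ_*(H₁(D)) to 1-cycles of C
    (L' : Submodule (ZMod 2) (Fin c1 → ZMod 2))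
    (hL'cyc : ∀ v ∈ L', dC1.mulVec v = 0)
    (hL'nt : ∀ v ∈ L', v ≠ 0 →
        ¬∃ (z : Fin d1 → ZMod 2) (b : Fin c2 → ZMod 2),
          dD1.mulVec z = 0 ∧ v = γ1.mulVec z + dC2.mulVec b)
    (hL'span : ∀ v : Fin c1 → ZMod 2, dC1.mulVec v = 0 →
        ∃ L ∈ L', ∃ (z : Fin d1 → ZMod 2) (b : Fin c2 → ZMod 2),
          dD1.mulVec z = 0 ∧ v + L = γ1.mulVec z + dC2.mulVec b) :
    -- main inequality
    (∀ (L : Fin c1 → ZMod 2), L ∈ L' → L ≠ 0 →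
      ∀ (b : Fin c2 → ZMod 2) (u : Fin d1 → ZMod 2),
        sInf ((fun v => (hammingNorm v : ℕ∞)) ''
            {v : Fin c1 → ZMod 2 | dC1.mulVec v = 0 ∧
              ¬∃ x : Fin c2 → ZMod 2, dC2.mulVec x = v}) ≤
          ((hammingNorm (dD1.mulVec u) +
            hammingNorm ((L + dC2.mulVec b) + γ1.mulVec u) : ℕ) : ℕ∞)) ∧
    -- in particular d_X(tot E) ≥ d_X(C)
    sInf ((fun v => (hammingNorm v : ℕ∞)) ''
        {v : Fin c1 → ZMod 2 | dC1.mulVec v = 0 ∧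
          ¬∃ x : Fin c2 → ZMod 2, dC2.mulVec x = v}) ≤
      sInf ((fun p => ((hammingNorm p.1 + hammingNorm p.2 : ℕ) : ℕ∞)) ''
        {p : (Fin d0 → ZMod 2) × (Fin c1 → ZMod 2) |
          γ0.mulVec p.1 + dC1.mulVec p.2 = 0 ∧
          ¬∃ (u : Fin d1 → ZMod 2) (b : Fin c2 → ZMod 2),
            p.1 = dD1.mulVec u ∧ p.2 = γ1.mulVec u + dC2.mulVec b}) := by

  have key : ∀ (L : Fin c1 → ZMod 2), L ∈ L' → L ≠ 0 →
      ∀ (b : Fin c2 → ZMod 2) (u : Fin d1 → ZMod 2),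
        sInf ((fun v => (hammingNorm v : ℕ∞)) ''
            {v : Fin c1 → ZMod 2 | dC1.mulVec v = 0 ∧
              ¬∃ x : Fin c2 → ZMod 2, dC2.mulVec x = v}) ≤
          ((hammingNorm (dD1.mulVec u) +
            hammingNorm ((L + dC2.mulVec b) + γ1.mulVec u) : ℕ) : ℕ∞) := by
    intro L hL hL0 b u
    obtain ⟨z, hz, hwt⟩ : ∃ z, dD1.mulVec z = 0 ∧
        hammingNorm (γ1.mulVec (u + z)) ≤ hammingNorm (dD1.mulVec u) := by
      by_cases hu : dD1.mulVec u = 0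
      · exact ⟨u, hu, by simp [v_addself u]⟩
      · have hS : {k : ℕ | ∃ z, dD1.mulVec z = 0 ∧ hammingNorm (u + z) = k}.Nonempty :=
          ⟨hammingNorm u, 0, by simp, by simp⟩
        obtain ⟨z, hz, hzn⟩ := Nat.sInf_mem hS
        refine ⟨z, hz, ?_⟩
        have hcalc : (hammingNorm (γ1.mulVec (u + z)) : ℝ) ≤
            (hammingNorm (dD1.mulVec u) : ℝ) := by
          calc (hammingNorm (γ1.mulVec (u + z)) : ℝ)
              ≤ ω * hammingNorm (u + z) := hbγ1 (u + z)
            _ ≤ ε * hammingNorm (u + z) :=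
                mul_le_mul_of_nonneg_right hεω (by positivity)
            _ = ε * ((sInf {k : ℕ | ∃ z, dD1.mulVec z = 0 ∧
                  hammingNorm (u + z) = k} : ℕ) : ℝ) := by rw [hzn]
            _ ≤ (hammingNorm (dD1.mulVec u) : ℝ) := hexp u hu
        exact_mod_cast hcalc
    set v := L + dC2.mulVec b + γ1.mulVec z with hv
    have hb0 : dC1.mulVec (dC2.mulVec b) = 0 := by
      rw [Matrix.mulVec_mulVec, hC, Matrix.zero_mulVec]
    have hz0 : dC1.mulVec (γ1.mulVec z) = 0 := by
      rw [Matrix.mulVec_mulVec, ← hγ0, ← Matrix.mulVec_mulVec, hz, Matrix.mulVec_zero]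
    have hvcyc : dC1.mulVec v = 0 := by
      rw [hv, Matrix.mulVec_add, Matrix.mulVec_add, hL'cyc L hL, hb0, hz0]
      simp
    have hvnb : ¬∃ x : Fin c2 → ZMod 2, dC2.mulVec x = v := by
      rintro ⟨x, hx⟩
      rw [hv] at hx
      refine hL'nt L hL hL0 ⟨z, b + x, hz, ?_⟩
      rw [Matrix.mulVec_add]
      rw [eq_iff_add] at hx ⊢
      rw [← hx]
      abel
    have h1 : sInf ((fun v => (hammingNorm v : ℕ∞)) ''
        {v : Fin c1 → ZMod 2 | dC1.mulVec v = 0 ∧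
          ¬∃ x : Fin c2 → ZMod 2, dC2.mulVec x = v}) ≤ (hammingNorm v : ℕ∞) :=
      sInf_le ⟨v, ⟨hvcyc, hvnb⟩, rfl⟩
    have hrw : v = ((L + dC2.mulVec b) + γ1.mulVec u) + γ1.mulVec (u + z) := by
      rw [hv, Matrix.mulVec_add, eq_iff_add]
      abel_nf
      rw [show (2 : ℤ) • γ1.mulVec u = γ1.mulVec u + γ1.mulVec u from two_zsmul _,
        show (2 : ℤ) • γ1.mulVec z = γ1.mulVec z + γ1.mulVec z from two_zsmul _,
        show (2 : ℤ) • dC2.mulVec b = dC2.mulVec b + dC2.mulVec b from two_zsmul _,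
        show (2 : ℤ) • L = L + L from two_zsmul _]
      simp [v_addself]
    have h2 : hammingNorm v ≤ hammingNorm (dD1.mulVec u) +
        hammingNorm ((L + dC2.mulVec b) + γ1.mulVec u) := by
      calc hammingNorm v
          ≤ hammingNorm ((L + dC2.mulVec b) + γ1.mulVec u) +
              hammingNorm (γ1.mulVec (u + z)) := by rw [hrw]; exact hn_add_le _ _
        _ ≤ _ := by omega
    exact h1.trans (by exact_mod_cast h2)
  refine ⟨key, le_sInf ?_⟩
  rintro x ⟨⟨a, c⟩, ⟨hcyc, hnb⟩, rfl⟩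
  obtain ⟨u, hu⟩ := hsurj a
  have hv0 : dC1.mulVec (c + γ1.mulVec u) = 0 := by
    rw [Matrix.mulVec_add, Matrix.mulVec_mulVec, ← hγ0, ← Matrix.mulVec_mulVec, hu, add_comm]
    exact hcyc
  obtain ⟨L, hL, z, b, hz, heq⟩ := hL'span _ hv0
  have hdd : dD1.mulVec (u + z) = a := by
    rw [Matrix.mulVec_add, hz, add_zero, hu]
  have hc : (L + dC2.mulVec b) + γ1.mulVec (u + z) = c := by
    rw [Matrix.mulVec_add, eq_iff_add]
    rw [eq_iff_add] at heq
    rw [← heq]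
    abel
  by_cases hL0 : L = 0
  · exact absurd ⟨u + z, b, hdd.symm, by rw [← hc, hL0]; abel⟩ hnb
  · have hk := key L hL hL0 b (u + z)
    rw [hdd, hc] at hk
    exact hk
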